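/- arXiv:2210.03104 — 7 statements merged into one kernel-verified Lean document; each statement's English description precedes it below -/
import Mathlib

section
/- Let q be a task distribution on 𝒮 with q(g) > 0 for all g, and set Z = ∑_{g∈𝒮} √(q(g)). Then the meta-policy π_q*(g) = √(q(g))/Z minimizes regret on q: for every meta-policy π with π(g) > 0 for all g, Regret(π, q) ≥ Regret(π_q*, q), with equality if and only if π = π_q*. -/
/-- The meta-policy `π_q* g = √(q g) / Z`, `Z = ∑ √(q g)`, minimizes regret on `q`:
every positive meta-policy `π` has at least as much regret, with equality iff `π = π_q*`. -/
theorem stmt_2 {S : Type*} [Fintype S] [Nonempty S]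
    (q : S → ℝ) (hq0 : ∀ g, 0 < q g) (hq1 : ∑ g, q g = 1)
    (Z : ℝ) (hZ : Z = ∑ g, Real.sqrt (q g))
    (πstar : S → ℝ) (hπstar : ∀ g, πstar g = Real.sqrt (q g) / Z)
    (π : S → ℝ) (hπpos : ∀ g, 0 < π g) (hπ1 : ∑ g, π g = 1) :
    ∑ g, q g / πstar g ≤ ∑ g, q g / π g ∧
      (∑ g, q g / π g = ∑ g, q g / πstar g ↔ π = πstar) := by
  have hZpos : 0 < Z := by
    rw [hZ]
    exact Finset.sum_pos (fun g _ => Real.sqrt_pos.mpr (hq0 g)) Finset.univ_nonempty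
  -- value at πstar
  have hstar : ∑ g, q g / πstar g = Z ^ 2 := by
    have : ∀ g, q g / πstar g = Real.sqrt (q g) * Z := by
      intro g
      rw [hπstar g, div_div_eq_mul_div, mul_comm (q g) Z, mul_div_assoc, Real.div_sqrt,
        mul_comm]
    simp only [this]
    rw [← Finset.sum_mul, ← hZ]
    ring
  set f : S → ℝ := fun g => (Real.sqrt (q g / π g) - Z * Real.sqrt (π g)) ^ 2 with hf
  have hterm : ∀ g, f g = q g / π g - 2 * Z * Real.sqrt (q g) + Z ^ 2 * π g := by
    intro g
    have h1 : Real.sqrt (q g / π g) ^ 2 = q g / π g :=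
      Real.sq_sqrt (le_of_lt (div_pos (hq0 g) (hπpos g)))
    have h2 : Real.sqrt (π g) ^ 2 = π g := Real.sq_sqrt (hπpos g).le
    have h3 : Real.sqrt (q g / π g) * Real.sqrt (π g) = Real.sqrt (q g) := by
      rw [← Real.sqrt_mul (le_of_lt (div_pos (hq0 g) (hπpos g))),
        div_mul_cancel₀ _ (hπpos g).ne']
    have expand : (Real.sqrt (q g / π g) - Z * Real.sqrt (π g)) ^ 2 =
        Real.sqrt (q g / π g) ^ 2 - 2 * Z * (Real.sqrt (q g / π g) * Real.sqrt (π g))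
          + Z ^ 2 * Real.sqrt (π g) ^ 2 := by ring
    rw [hf]
    simp only []
    rw [expand, h1, h2, h3]
  have hsum : ∑ g, q g / π g = Z ^ 2 + ∑ g, f g := by
    have : ∑ g, f g = (∑ g, q g / π g) - 2 * Z * (∑ g, Real.sqrt (q g))
        + Z ^ 2 * (∑ g, π g) := by
      rw [Finset.sum_congr rfl (fun g _ => hterm g)]
      rw [Finset.sum_add_distrib, Finset.sum_sub_distrib, ← Finset.mul_sum, ← Finset.mul_sum]
    rw [hπ1, ← hZ] at this
    linarith
  have hfnn : ∀ g ∈ Finset.univ, 0 ≤ f g := fun g _ => sq_nonneg _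
  have hfsumnn : 0 ≤ ∑ g, f g := Finset.sum_nonneg hfnn
  constructor
  · rw [hstar, hsum]; linarith
  · constructor
    · intro h
      rw [hstar] at h
      have hzero : ∑ g, f g = 0 := by linarith [hsum]
      funext g
      have hg : f g = 0 := (Finset.sum_eq_zero_iff_of_nonneg hfnn).mp hzero g (by simp)
      have : Real.sqrt (q g / π g) = Z * Real.sqrt (π g) := by
        have := sq_eq_zero_iff.mp hg
        linarith
      have hsq : q g / π g = Z ^ 2 * π g := by
        have h1 : Real.sqrt (q g / π g) ^ 2 = q g / π g :=
          Real.sq_sqrt (le_of_lt (div_pos (hq0 g) (hπpos g)))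
        have h2 : Real.sqrt (π g) ^ 2 = π g := Real.sq_sqrt (hπpos g).le
        rw [← h1, this]; ring_nf; nlinarith [h2]
      have hq' : q g = Z ^ 2 * π g * π g := (div_eq_iff (hπpos g).ne').mp hsq
      have hπsq : π g ^ 2 = q g / Z ^ 2 := by
        rw [hq']; field_simp
      have hπeq : π g = Real.sqrt (q g / Z ^ 2) := by
        rw [← hπsq, Real.sqrt_sq (hπpos g).le]
      rw [hπstar g, hπeq, Real.sqrt_div (hq0 g).le, Real.sqrt_sq hZpos.le]
    · intro h
      rw [h]
end

section
/- Suppose 0 < ε̄ < 1. For every task distribution q' with D_TV(p_D, q') ≤ ε, the regret of the ε-robust meta-policy π^ε on q' is at most its regret on q^ε: Regret(π^ε, q') ≤ Regret(π^ε, q^ε). That is, q^ε is a worst-case task distribution for π^ε within the total-variation ball of radius ε around p_D. -/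
/-- With `0 < ε̄ < 1`, for every task distribution `q'` within total-variation distance `ε`
of the training distribution `p_D`, the regret of the ε-robust meta-policy `π^ε` on `q'`
is at most its regret on the perturbed distribution `q^ε`: `q^ε` is worst-case for `π^ε`
within the TV ε-ball around `p_D`. -/
theorem stmt_7 {S : Type*} [Fintype S] [DecidableEq S] [Nonempty S]
    (S0 : Finset S) (hS0 : S0.Nonempty) (hS1 : S0ᶜ.Nonempty)
    (β ε : ℝ) (hβ0 : 0 ≤ β) (hβ1 : β ≤ 1) (hε : 0 ≤ ε)
    (εbar : ℝ) (hεbar : εbar = min (ε + β) ((S0ᶜ.card : ℝ) / Fintype.card S))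
    (hpos : 0 < εbar) (hlt : εbar < 1)
    (pD qε : S → ℝ)
    (hpD : ∀ g, pD g = if g ∈ S0 then (1 - β) / S0.card else β / S0ᶜ.card)
    (hqε : ∀ g, qε g = if g ∈ S0 then (1 - εbar) / S0.card else εbar / S0ᶜ.card)
    (Z : ℝ) (hZ : Z = Real.sqrt ((1 - εbar) * S0.card) + Real.sqrt (εbar * S0ᶜ.card))
    (πε : S → ℝ)
    (hπε : ∀ g, πε g = if g ∈ S0 then Real.sqrt ((1 - εbar) / S0.card) / Z
        else Real.sqrt (εbar / S0ᶜ.card) / Z)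
    (q' : S → ℝ) (hq'0 : ∀ g, 0 ≤ q' g) (hq'1 : ∑ g, q' g = 1)
    (hTV : (1 / 2) * ∑ g, |pD g - q' g| ≤ ε) :
    ∑ g, q' g / πε g ≤ ∑ g, qε g / πε g := by
  classical
  set n0 : ℝ := (S0.card : ℝ) with hn0def
  set n1 : ℝ := (S0ᶜ.card : ℝ) with hn1def
  have hn0 : 0 < n0 := by rw [hn0def]; exact_mod_cast Finset.card_pos.2 hS0
  have hn1 : 0 < n1 := by rw [hn1def]; exact_mod_cast Finset.card_pos.2 hS1
  have hcard : n0 + n1 = (Fintype.card S : ℝ) := by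
    rw [hn0def, hn1def]
    exact_mod_cast congrArg (Nat.cast : ℕ → ℝ) (S0.card_add_card_compl)
  set A : ℝ := Real.sqrt ((1 - εbar) / n0) with hAdef
  set B : ℝ := Real.sqrt (εbar / n1) with hBdef
  have hA : 0 < A := Real.sqrt_pos.2 (div_pos (by linarith) hn0)
  have hB : 0 < B := Real.sqrt_pos.2 (div_pos hpos hn1)
  have hZpos : 0 < Z := by
    rw [hZ]
    have h1 := Real.sqrt_pos.2 (mul_pos (by linarith : (0:ℝ) < 1 - εbar) hn0)
    have h2 := Real.sqrt_nonneg (εbar * n1)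
    linarith
  set Q0 : ℝ := ∑ g ∈ S0, q' g with hQ0def
  set Q1 : ℝ := ∑ g ∈ S0ᶜ, q' g with hQ1def
  clear_value n0 n1 A B Q0 Q1
  have hQsum : Q0 + Q1 = 1 := by
    rw [hQ0def, hQ1def, Finset.sum_add_sum_compl]; exact hq'1
  have hLHS : ∑ g, q' g / πε g = Q0 * (Z / A) + Q1 * (Z / B) := by
    rw [← Finset.sum_add_sum_compl S0]
    congr 1
    · have h : ∀ g ∈ S0, q' g / πε g = q' g * (Z / A) := by
        intro g hg
        rw [hπε g, if_pos hg, div_div_eq_mul_div, mul_div_assoc]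
      rw [Finset.sum_congr rfl h, ← Finset.sum_mul, hQ0def]
    · have h : ∀ g ∈ S0ᶜ, q' g / πε g = q' g * (Z / B) := by
        intro g hg
        rw [hπε g, if_neg (Finset.mem_compl.mp hg), div_div_eq_mul_div, mul_div_assoc]
      rw [Finset.sum_congr rfl h, ← Finset.sum_mul, hQ1def]
  have hRHS : ∑ g, qε g / πε g = (1 - εbar) * (Z / A) + εbar * (Z / B) := by
    rw [← Finset.sum_add_sum_compl S0]
    congr 1
    · have h : ∀ g ∈ S0, qε g / πε g = ((1 - εbar) / n0) * (Z / A) := by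
        intro g hg
        rw [hqε g, if_pos hg, hπε g, if_pos hg, div_div_eq_mul_div, mul_div_assoc]
      rw [Finset.sum_congr rfl h, Finset.sum_const, nsmul_eq_mul, ← hn0def]
      field_simp
    · have h : ∀ g ∈ S0ᶜ, qε g / πε g = (εbar / n1) * (Z / B) := by
        intro g hg
        rw [hqε g, if_neg (Finset.mem_compl.mp hg), hπε g,
          if_neg (Finset.mem_compl.mp hg), div_div_eq_mul_div, mul_div_assoc]
      rw [Finset.sum_congr rfl h, Finset.sum_const, nsmul_eq_mul, ← hn1def]
      field_simp
  rw [hLHS, hRHS]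
  rcases min_cases (ε + β) ((S0ᶜ.card : ℝ) / Fintype.card S) with ⟨hm, hle⟩ | ⟨hm, hle⟩ <;>
    rw [← hn1def] at hm hle
  · -- εbar = ε + β ≤ n1/(n0+n1)
    have hεeq : εbar = ε + β := hεbar.trans hm
    have hQ1le : Q1 ≤ εbar := by
      have hpD0 : ∑ g ∈ S0, pD g = 1 - β := by
        have h : ∀ g ∈ S0, pD g = (1 - β) / n0 := fun g hg => by rw [hpD g, if_pos hg]
        rw [Finset.sum_congr rfl h, Finset.sum_const, nsmul_eq_mul, ← hn0def]
        field_simp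
      have hpD1 : ∑ g ∈ S0ᶜ, pD g = β := by
        have h : ∀ g ∈ S0ᶜ, pD g = β / n1 := fun g hg => by
          rw [hpD g, if_neg (Finset.mem_compl.mp hg)]
        rw [Finset.sum_congr rfl h, Finset.sum_const, nsmul_eq_mul, ← hn1def]
        field_simp
      have h1 : Q1 - β ≤ ∑ g ∈ S0ᶜ, |pD g - q' g| := by
        have h : ∀ g ∈ S0ᶜ, q' g - pD g ≤ |pD g - q' g| := fun g _ => by
          rw [abs_sub_comm]; exact le_abs_self _
        calc Q1 - β = ∑ g ∈ S0ᶜ, (q' g - pD g) := by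
              rw [Finset.sum_sub_distrib, hpD1, hQ1def]
          _ ≤ _ := Finset.sum_le_sum h
      have h2 : (1 - β) - Q0 ≤ ∑ g ∈ S0, |pD g - q' g| := by
        have h : ∀ g ∈ S0, pD g - q' g ≤ |pD g - q' g| := fun g _ => le_abs_self _
        calc (1 - β) - Q0 = ∑ g ∈ S0, (pD g - q' g) := by
              rw [Finset.sum_sub_distrib, hpD0, hQ0def]
          _ ≤ _ := Finset.sum_le_sum h
      have htot : ∑ g, |pD g - q' g|
          = ∑ g ∈ S0, |pD g - q' g| + ∑ g ∈ S0ᶜ, |pD g - q' g| :=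
        (Finset.sum_add_sum_compl S0 _).symm
      rw [htot] at hTV
      linarith
    have hBA : B ≤ A := by
      rw [hAdef, hBdef]
      apply Real.sqrt_le_sqrt
      rw [div_le_div_iff₀ hn1 hn0]
      have hratio : εbar ≤ n1 / (n0 + n1) := by
        rw [hεbar, hcard]; exact min_le_right _ _
      have h : εbar * (n0 + n1) ≤ n1 := by
        rw [← le_div_iff₀ (by linarith)]; exact hratio
      nlinarith
    have huv : (εbar - Q1) * (Z / A) ≤ (εbar - Q1) * (Z / B) :=
      mul_le_mul_of_nonneg_left (div_le_div_of_nonneg_left hZpos.le hB hBA)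
        (by linarith)
    have hQ0eq : Q0 = 1 - Q1 := by linarith
    rw [hQ0eq]
    linarith [huv]
  · -- εbar = n1/(n0+n1), so A = B
    have hAB : A = B := by
      rw [hAdef, hBdef]
      congr 1
      have h : εbar = n1 / (n0 + n1) := by rw [hεbar, hcard]; exact hm
      rw [h]
      field_simp
      ring
    rw [hAB]
    have h1 : Q0 * (Z / B) + Q1 * (Z / B) = (Q0 + Q1) * (Z / B) := by ring
    have h2 : (1 - εbar) * (Z / B) + εbar * (Z / B) = (Z / B) := by ring
    rw [h1, hQsum, one_mul, h2]
end

section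
/- Suppose 0 < ε̄ < 1. The ε-robust meta-policy π^ε is exactly the regret-optimal meta-policy for the task distribution q^ε: π^ε(g) = √(q^ε(g)) / ∑_{g'∈𝒮} √(q^ε(g')) for every g ∈ 𝒮, and consequently Regret(π, q^ε) ≥ Regret(π^ε, q^ε) = Z_ε² for every meta-policy π with π(g) > 0 for all g. -/
lemma aux_card_sqrt (x c : ℝ) (hx : 0 ≤ x) (hc : 0 < c) :
    c * Real.sqrt (x / c) = Real.sqrt (x * c) := by
  have hsc : 0 < Real.sqrt c := Real.sqrt_pos.2 hc
  rw [Real.sqrt_div hx, Real.sqrt_mul hx, mul_div_assoc', mul_comm c,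
    div_eq_iff hsc.ne', mul_assoc, Real.mul_self_sqrt hc.le]

/-- With `0 < ε̄ < 1`, the ε-robust meta-policy `π^ε` is exactly the regret-optimal
meta-policy for the perturbed distribution `q^ε`: `π^ε g = √(q^ε g) / ∑ √(q^ε g')`,
and consequently every positive meta-policy `π` satisfies
`Regret(π, q^ε) ≥ Regret(π^ε, q^ε) = Z_ε²`. -/
theorem stmt_8 {S : Type*} [Fintype S] [DecidableEq S] [Nonempty S]
    (S0 : Finset S) (hS0 : S0.Nonempty) (hS1 : S0ᶜ.Nonempty)
    (β ε : ℝ) (hβ0 : 0 ≤ β) (hβ1 : β ≤ 1) (hε : 0 ≤ ε)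
    (εbar : ℝ) (hεbar : εbar = min (ε + β) ((S0ᶜ.card : ℝ) / Fintype.card S))
    (hpos : 0 < εbar) (hlt : εbar < 1)
    (qε : S → ℝ)
    (hqε : ∀ g, qε g = if g ∈ S0 then (1 - εbar) / S0.card else εbar / S0ᶜ.card)
    (Z : ℝ) (hZ : Z = Real.sqrt ((1 - εbar) * S0.card) + Real.sqrt (εbar * S0ᶜ.card))
    (πε : S → ℝ)
    (hπε : ∀ g, πε g = if g ∈ S0 then Real.sqrt ((1 - εbar) / S0.card) / Z
        else Real.sqrt (εbar / S0ᶜ.card) / Z) :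
    (∀ g, πε g = Real.sqrt (qε g) / ∑ g', Real.sqrt (qε g')) ∧
    (∀ π : S → ℝ, (∀ g, 0 < π g) → (∑ g, π g = 1) →
      ∑ g, qε g / πε g ≤ ∑ g, qε g / π g) ∧
    ∑ g, qε g / πε g = Z ^ 2 := by
  have hc0 : (0:ℝ) < S0.card := by exact_mod_cast hS0.card_pos
  have hc1 : (0:ℝ) < S0ᶜ.card := by exact_mod_cast hS1.card_pos
  have h1ε : (0:ℝ) < 1 - εbar := by linarith
  have hqpos : ∀ g, 0 < qε g := by
    intro g
    rw [hqε g]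
    split
    · exact div_pos h1ε hc0
    · exact div_pos hpos hc1
  have hZpos : 0 < Z := by
    rw [hZ]
    have h1 := Real.sqrt_pos.2 (mul_pos h1ε hc0)
    have h2 := Real.sqrt_nonneg (εbar * (S0ᶜ.card : ℝ))
    linarith
  -- sum of square roots equals Z
  have hsum : ∑ g, Real.sqrt (qε g) = Z := by
    have hrw : ∀ g : S, Real.sqrt (qε g) =
        if g ∈ S0 then Real.sqrt ((1 - εbar) / S0.card) else Real.sqrt (εbar / S0ᶜ.card) := by
      intro g; rw [hqε g]; exact apply_ite Real.sqrt _ _ _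
    calc ∑ g, Real.sqrt (qε g)
        = ∑ g : S, (if g ∈ S0 then Real.sqrt ((1 - εbar) / S0.card)
            else Real.sqrt (εbar / S0ᶜ.card)) := Finset.sum_congr rfl (fun g _ => hrw g)
      _ = (S0.card : ℝ) * Real.sqrt ((1 - εbar) / S0.card)
            + (S0ᶜ.card : ℝ) * Real.sqrt (εbar / S0ᶜ.card) := by
          rw [Finset.sum_ite, Finset.sum_const, Finset.sum_const]
          simp [Finset.filter_mem_eq_inter, Finset.filter_not, nsmul_eq_mul,
            Finset.compl_eq_univ_sdiff]
      _ = Z := by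
          rw [aux_card_sqrt _ _ h1ε.le hc0, aux_card_sqrt _ _ hpos.le hc1, hZ]
  have hπeq : ∀ g, πε g = Real.sqrt (qε g) / ∑ g', Real.sqrt (qε g') := by
    intro g
    rw [hsum, hπε g, hqε g]
    split <;> rfl
  -- regret of πε
  have hreg : ∑ g, qε g / πε g = Z ^ 2 := by
    have : ∀ g, qε g / πε g = Z * Real.sqrt (qε g) := by
      intro g
      rw [hπeq g, hsum, div_div_eq_mul_div, mul_comm, mul_div_assoc, Real.div_sqrt]
    rw [Finset.sum_congr rfl (fun g _ => this g), ← Finset.mul_sum, hsum, sq]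
  refine ⟨hπeq, ?_, hreg⟩
  intro π hπpos hπsum
  rw [hreg]
  have key : (∑ g, Real.sqrt (qε g)) ^ 2 ≤ (∑ g, qε g / π g) * (∑ g, π g) := by
    have h1 : ∀ g : S, Real.sqrt (qε g) = Real.sqrt (qε g / π g) * Real.sqrt (π g) := by
      intro g
      rw [← Real.sqrt_mul (div_nonneg (hqpos g).le (hπpos g).le),
        div_mul_cancel₀ _ (hπpos g).ne']
    calc (∑ g, Real.sqrt (qε g)) ^ 2
        = (∑ g, Real.sqrt (qε g / π g) * Real.sqrt (π g)) ^ 2 := by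
          rw [Finset.sum_congr rfl (fun g _ => h1 g)]
      _ ≤ (∑ g, Real.sqrt (qε g / π g) ^ 2) * (∑ g, Real.sqrt (π g) ^ 2) :=
          Finset.sum_mul_sq_le_sq_mul_sq _ _ _
      _ = (∑ g, qε g / π g) * (∑ g, π g) := by
          congr 1
          · exact Finset.sum_congr rfl fun g _ =>
              Real.sq_sqrt (div_nonneg (hqpos g).le (hπpos g).le)
          · exact Finset.sum_congr rfl fun g _ => Real.sq_sqrt (hπpos g).le
  rw [hπsum, mul_one] at key
  rw [hsum] at key
  exact key
end

section
/- Suppose 0 < ε̄₁ < 1 where ε̄₁ = min{ε₁ + β, |𝒮₁|/|𝒮|}. Then the regret of the ε₁-robust meta-policy π^{ε₁} on the perturbed task distribution q^{ε₁} is Regret(π^{ε₁}, q^{ε₁}) = (1−ε̄₁)|𝒮₀| + ε̄₁|𝒮₁| + 2√( ε̄₁(1−ε̄₁)|𝒮₀||𝒮₁| ). -/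
/-- With `0 < ε̄₁ < 1`, the regret of the ε₁-robust meta-policy on the perturbed
distribution `q^{ε₁}` is `(1-ε̄₁)|S0| + ε̄₁|S1| + 2√(ε̄₁(1-ε̄₁)|S0||S1|)`. -/
theorem stmt_11 {S : Type*} [Fintype S] [DecidableEq S] [Nonempty S]
    (S0 : Finset S) (hS0 : S0.Nonempty) (hS1 : S0ᶜ.Nonempty)
    (β ε1 : ℝ) (hβ0 : 0 ≤ β) (hβ1 : β ≤ 1) (hε1 : 0 ≤ ε1)
    (εbar1 : ℝ) (hεbar1 : εbar1 = min (ε1 + β) ((S0ᶜ.card : ℝ) / Fintype.card S))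
    (hpos : 0 < εbar1) (hlt : εbar1 < 1)
    (qε1 : S → ℝ)
    (hqε1 : ∀ g, qε1 g = if g ∈ S0 then (1 - εbar1) / S0.card else εbar1 / S0ᶜ.card)
    (Z1 : ℝ) (hZ1 : Z1 = Real.sqrt ((1 - εbar1) * S0.card) + Real.sqrt (εbar1 * S0ᶜ.card))
    (πε1 : S → ℝ)
    (hπε1 : ∀ g, πε1 g = if g ∈ S0 then Real.sqrt ((1 - εbar1) / S0.card) / Z1
        else Real.sqrt (εbar1 / S0ᶜ.card) / Z1) :
    ∑ g, qε1 g / πε1 g =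
      (1 - εbar1) * S0.card + εbar1 * S0ᶜ.card +
        2 * Real.sqrt (εbar1 * (1 - εbar1) * S0.card * S0ᶜ.card) := by
  have hn0 : (0:ℝ) < S0.card := by exact_mod_cast hS0.card_pos
  have hn1 : (0:ℝ) < S0ᶜ.card := by exact_mod_cast hS1.card_pos
  have h1ε : (0:ℝ) < 1 - εbar1 := by linarith
  have hZpos : 0 < Z1 := by
    rw [hZ1]; positivity
  have helper : ∀ x : ℝ, 0 < x → x / (Real.sqrt x / Z1) = Real.sqrt x * Z1 := by
    intro x hx
    have hs : 0 < Real.sqrt x := Real.sqrt_pos.2 hx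
    have h2 : Real.sqrt x * Real.sqrt x = x := Real.mul_self_sqrt hx.le
    field_simp
    nlinarith [h2]
  have hterm : ∀ g, qε1 g / πε1 g =
      if g ∈ S0 then Real.sqrt ((1 - εbar1) / S0.card) * Z1
      else Real.sqrt (εbar1 / S0ᶜ.card) * Z1 := by
    intro g
    rw [hqε1, hπε1]
    by_cases h : g ∈ S0 <;> simp only [h, if_true, if_false]
    · exact helper _ (by positivity)
    · exact helper _ (by positivity)
  have A : ∑ g ∈ S0, qε1 g / πε1 g =
      (S0.card : ℝ) * (Real.sqrt ((1 - εbar1) / S0.card) * Z1) := by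
    rw [Finset.sum_congr rfl (fun g hg => by rw [hterm g, if_pos hg]),
        Finset.sum_const, nsmul_eq_mul]
  have B : ∑ g ∈ S0ᶜ, qε1 g / πε1 g =
      (S0ᶜ.card : ℝ) * (Real.sqrt (εbar1 / S0ᶜ.card) * Z1) := by
    rw [Finset.sum_congr rfl (fun g hg => by
          rw [hterm g, if_neg (Finset.mem_compl.mp hg)]),
        Finset.sum_const, nsmul_eq_mul]
  have hsum : ∑ g, qε1 g / πε1 g =
      (S0.card : ℝ) * (Real.sqrt ((1 - εbar1) / S0.card) * Z1) +
      (S0ᶜ.card : ℝ) * (Real.sqrt (εbar1 / S0ᶜ.card) * Z1) := by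
    rw [← Finset.sum_add_sum_compl S0 (fun g => qε1 g / πε1 g), A, B]
  have key : ∀ x n : ℝ, 0 ≤ x → 0 < n → (n : ℝ) * Real.sqrt (x / n) = Real.sqrt (x * n) := by
    intro x n hx hn
    rw [← Real.sqrt_sq hn.le, ← Real.sqrt_mul (by positivity)]
    congr 1
    field_simp
    rw [Real.sq_sqrt (by positivity)]
    ring
  have e0 : (S0.card : ℝ) * Real.sqrt ((1 - εbar1) / S0.card) =
      Real.sqrt ((1 - εbar1) * S0.card) := key _ _ h1ε.le hn0
  have e1 : (S0ᶜ.card : ℝ) * Real.sqrt (εbar1 / S0ᶜ.card) =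
      Real.sqrt (εbar1 * S0ᶜ.card) := key _ _ hpos.le hn1
  have hab : Real.sqrt ((1 - εbar1) * S0.card) * Real.sqrt (εbar1 * S0ᶜ.card) =
      Real.sqrt (εbar1 * (1 - εbar1) * S0.card * S0ᶜ.card) := by
    rw [← Real.sqrt_mul (by positivity)]
    ring_nf
  have ha2 : Real.sqrt ((1 - εbar1) * S0.card) ^ 2 = (1 - εbar1) * S0.card :=
    Real.sq_sqrt (by positivity)
  have hb2 : Real.sqrt (εbar1 * S0ᶜ.card) ^ 2 = εbar1 * S0ᶜ.card :=
    Real.sq_sqrt (by positivity)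
  calc ∑ g, qε1 g / πε1 g
      = (S0.card : ℝ) * Real.sqrt ((1 - εbar1) / S0.card) * Z1 +
        (S0ᶜ.card : ℝ) * Real.sqrt (εbar1 / S0ᶜ.card) * Z1 := by rw [hsum]; ring
    _ = (Real.sqrt ((1 - εbar1) * S0.card) + Real.sqrt (εbar1 * S0ᶜ.card)) * Z1 := by
        rw [e0, e1]; ring
    _ = (1 - εbar1) * S0.card + εbar1 * S0ᶜ.card +
        2 * Real.sqrt (εbar1 * (1 - εbar1) * S0.card * S0ᶜ.card) := by
        rw [hZ1, ← hab]
        nlinarith [ha2, hb2]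
end

section
/- Suppose 0 < ε̄₁ < 1 and 0 < ε̄₂ < 1, where ε̄ᵢ = min{εᵢ + β, |𝒮₁|/|𝒮|}, and let c = √( (ε̄₂⁻¹ − 1)/(ε̄₁⁻¹ − 1) ). Then the regret of the ε₂-robust meta-policy π^{ε₂} on the perturbed task distribution q^{ε₁} is Regret(π^{ε₂}, q^{ε₁}) = (1−ε̄₁)|𝒮₀| + ε̄₁|𝒮₁| + √( ε̄₁(1−ε̄₁)|𝒮₀||𝒮₁| ) · ( c + 1/c ). -/
/-- With `0 < ε̄₁ < 1` and `0 < ε̄₂ < 1`, setting `c = √((ε̄₂⁻¹ - 1)/(ε̄₁⁻¹ - 1))`,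
the regret of the ε₂-robust meta-policy on the perturbed distribution `q^{ε₁}` is
`(1-ε̄₁)|S0| + ε̄₁|S1| + √(ε̄₁(1-ε̄₁)|S0||S1|)·(c + 1/c)`. -/
theorem stmt_12 {S : Type*} [Fintype S] [DecidableEq S] [Nonempty S]
    (S0 : Finset S) (hS0 : S0.Nonempty) (hS1 : S0ᶜ.Nonempty)
    (β ε1 ε2 : ℝ) (hβ0 : 0 ≤ β) (hβ1 : β ≤ 1) (hε1 : 0 ≤ ε1) (hε2 : 0 ≤ ε2)
    (εbar1 εbar2 : ℝ)
    (hεbar1 : εbar1 = min (ε1 + β) ((S0ᶜ.card : ℝ) / Fintype.card S))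
    (hεbar2 : εbar2 = min (ε2 + β) ((S0ᶜ.card : ℝ) / Fintype.card S))
    (hpos1 : 0 < εbar1) (hlt1 : εbar1 < 1)
    (hpos2 : 0 < εbar2) (hlt2 : εbar2 < 1)
    (c : ℝ) (hc : c = Real.sqrt ((εbar2⁻¹ - 1) / (εbar1⁻¹ - 1)))
    (qε1 : S → ℝ)
    (hqε1 : ∀ g, qε1 g = if g ∈ S0 then (1 - εbar1) / S0.card else εbar1 / S0ᶜ.card)
    (Z2 : ℝ) (hZ2 : Z2 = Real.sqrt ((1 - εbar2) * S0.card) + Real.sqrt (εbar2 * S0ᶜ.card))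
    (πε2 : S → ℝ)
    (hπε2 : ∀ g, πε2 g = if g ∈ S0 then Real.sqrt ((1 - εbar2) / S0.card) / Z2
        else Real.sqrt (εbar2 / S0ᶜ.card) / Z2) :
    ∑ g, qε1 g / πε2 g =
      (1 - εbar1) * S0.card + εbar1 * S0ᶜ.card +
        Real.sqrt (εbar1 * (1 - εbar1) * S0.card * S0ᶜ.card) * (c + 1 / c) := by

  classical
  have hA : (0:ℝ) < (S0.card : ℝ) := by exact_mod_cast Finset.card_pos.mpr hS0
  have hB : (0:ℝ) < (S0ᶜ.card : ℝ) := by exact_mod_cast Finset.card_pos.mpr hS1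
  have h1a : (0:ℝ) < 1 - εbar1 := by linarith
  have h2a : (0:ℝ) < 1 - εbar2 := by linarith
  set p := Real.sqrt (1 - εbar2) with hp
  set q := Real.sqrt εbar2 with hq
  set u := Real.sqrt (S0.card : ℝ) with hu
  set v := Real.sqrt (S0ᶜ.card : ℝ) with hv
  set r := Real.sqrt εbar1 with hr
  set s := Real.sqrt (1 - εbar1) with hs
  have hp0 : 0 < p := Real.sqrt_pos.mpr h2a
  have hq0 : 0 < q := Real.sqrt_pos.mpr hpos2
  have hu0 : 0 < u := Real.sqrt_pos.mpr hA
  have hv0 : 0 < v := Real.sqrt_pos.mpr hB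
  have hr0 : 0 < r := Real.sqrt_pos.mpr hpos1
  have hs0 : 0 < s := Real.sqrt_pos.mpr h1a
  have hpsq : p ^ 2 = 1 - εbar2 := Real.sq_sqrt h2a.le
  have hqsq : q ^ 2 = εbar2 := Real.sq_sqrt hpos2.le
  have husq : u ^ 2 = (S0.card : ℝ) := Real.sq_sqrt hA.le
  have hvsq : v ^ 2 = (S0ᶜ.card : ℝ) := Real.sq_sqrt hB.le
  have hrsq : r ^ 2 = εbar1 := Real.sq_sqrt hpos1.le
  have hssq : s ^ 2 = 1 - εbar1 := Real.sq_sqrt h1a.le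
  have hZ2' : Z2 = p * u + q * v := by
    rw [hZ2, Real.sqrt_mul h2a.le, Real.sqrt_mul hpos2.le]
  have hZ2pos : 0 < Z2 := by rw [hZ2']; positivity
  have hsq1 : Real.sqrt ((1 - εbar2) / (S0.card : ℝ)) = p / u := by
    rw [Real.sqrt_div h2a.le]
  have hsq2 : Real.sqrt (εbar2 / (S0ᶜ.card : ℝ)) = q / v := by
    rw [Real.sqrt_div hpos2.le]
  have hc' : c = (p * r) / (q * s) := by
    have e2 : εbar2⁻¹ - 1 = (1 - εbar2) / εbar2 := by field_simp
    have e1 : εbar1⁻¹ - 1 = (1 - εbar1) / εbar1 := by field_simp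
    rw [hc, e1, e2, Real.sqrt_div (by positivity), Real.sqrt_div h2a.le,
      Real.sqrt_div h1a.le]
    rw [← hp, ← hq, ← hr, ← hs]
    field_simp
  have hbig : Real.sqrt (εbar1 * (1 - εbar1) * (S0.card : ℝ) * (S0ᶜ.card : ℝ))
      = r * s * u * v := by
    rw [Real.sqrt_mul (by positivity), Real.sqrt_mul (by positivity),
      Real.sqrt_mul hpos1.le]
  have hsum : ∑ g, qε1 g / πε2 g =
      (S0.card : ℝ) * (((1 - εbar1) / (S0.card : ℝ)) / ((p / u) / Z2)) +
      (S0ᶜ.card : ℝ) * ((εbar1 / (S0ᶜ.card : ℝ)) / ((q / v) / Z2)) := by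
    rw [← Finset.sum_add_sum_compl S0]
    congr 1
    · rw [Finset.sum_congr rfl (fun g hg => by
        rw [hqε1, hπε2, if_pos hg, if_pos hg, hsq1]),
        Finset.sum_const, nsmul_eq_mul]
    · rw [Finset.sum_congr rfl (fun g hg => by
        have hg' : g ∉ S0 := Finset.mem_compl.mp hg
        rw [hqε1, hπε2, if_neg hg', if_neg hg', hsq2]),
        Finset.sum_const, nsmul_eq_mul]
  rw [hsum, hbig, hc', hZ2', ← hssq, ← hrsq, ← husq, ← hvsq]
  field_simp
  ring
end

section
/- Suppose 0 < ε̄₁ < 1 and 0 < ε̄₂ < 1, where ε̄ᵢ = min{εᵢ + β, |𝒮₁|/|𝒮|}, and let c = √( (ε̄₂⁻¹ − 1)/(ε̄₁⁻¹ − 1) ). Then the excess regret of the ε₂-robust meta-policy over the ε₁-robust meta-policy on the task distribution q^{ε₁} is exactly Regret(π^{ε₂}, q^{ε₁}) − Regret(π^{ε₁}, q^{ε₁}) = ( c + 1/c − 2 ) · √( ε̄₁(1−ε̄₁)|𝒮₀||𝒮₁| ). -/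
/-- With `0 < ε̄₁ < 1` and `0 < ε̄₂ < 1`, setting `c = √((ε̄₂⁻¹ - 1)/(ε̄₁⁻¹ - 1))`,
the excess regret of the ε₂-robust meta-policy over the ε₁-robust meta-policy on the
task distribution `q^{ε₁}` is exactly `(c + 1/c - 2)·√(ε̄₁(1-ε̄₁)|S0||S1|)`. -/
theorem stmt_13 {S : Type*} [Fintype S] [DecidableEq S] [Nonempty S]
    (S0 : Finset S) (hS0 : S0.Nonempty) (hS1 : S0ᶜ.Nonempty)
    (β ε1 ε2 : ℝ) (hβ0 : 0 ≤ β) (hβ1 : β ≤ 1) (hε1 : 0 ≤ ε1) (hε2 : 0 ≤ ε2)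
    (εbar1 εbar2 : ℝ)
    (hεbar1 : εbar1 = min (ε1 + β) ((S0ᶜ.card : ℝ) / Fintype.card S))
    (hεbar2 : εbar2 = min (ε2 + β) ((S0ᶜ.card : ℝ) / Fintype.card S))
    (hpos1 : 0 < εbar1) (hlt1 : εbar1 < 1)
    (hpos2 : 0 < εbar2) (hlt2 : εbar2 < 1)
    (c : ℝ) (hc : c = Real.sqrt ((εbar2⁻¹ - 1) / (εbar1⁻¹ - 1)))
    (qε1 : S → ℝ)
    (hqε1 : ∀ g, qε1 g = if g ∈ S0 then (1 - εbar1) / S0.card else εbar1 / S0ᶜ.card)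
    (Z1 : ℝ) (hZ1 : Z1 = Real.sqrt ((1 - εbar1) * S0.card) + Real.sqrt (εbar1 * S0ᶜ.card))
    (Z2 : ℝ) (hZ2 : Z2 = Real.sqrt ((1 - εbar2) * S0.card) + Real.sqrt (εbar2 * S0ᶜ.card))
    (πε1 : S → ℝ)
    (hπε1 : ∀ g, πε1 g = if g ∈ S0 then Real.sqrt ((1 - εbar1) / S0.card) / Z1
        else Real.sqrt (εbar1 / S0ᶜ.card) / Z1)
    (πε2 : S → ℝ)
    (hπε2 : ∀ g, πε2 g = if g ∈ S0 then Real.sqrt ((1 - εbar2) / S0.card) / Z2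
        else Real.sqrt (εbar2 / S0ᶜ.card) / Z2) :
    (∑ g, qε1 g / πε2 g) - (∑ g, qε1 g / πε1 g) =
      (c + 1 / c - 2) * Real.sqrt (εbar1 * (1 - εbar1) * S0.card * S0ᶜ.card) := by
  have ha : (0:ℝ) < S0.card := by exact_mod_cast Finset.card_pos.2 hS0
  have hb : (0:ℝ) < S0ᶜ.card := by exact_mod_cast Finset.card_pos.2 hS1
  set a : ℝ := (S0.card : ℝ)
  set b : ℝ := (S0ᶜ.card : ℝ)
  set s1 := Real.sqrt εbar1 with hs1
  set t1 := Real.sqrt (1 - εbar1) with ht1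
  set s2 := Real.sqrt εbar2 with hs2
  set t2 := Real.sqrt (1 - εbar2) with ht2
  set sa := Real.sqrt a with hsa
  set sb := Real.sqrt b with hsb
  have hs1p : 0 < s1 := Real.sqrt_pos.2 hpos1
  have ht1p : 0 < t1 := Real.sqrt_pos.2 (by linarith)
  have hs2p : 0 < s2 := Real.sqrt_pos.2 hpos2
  have ht2p : 0 < t2 := Real.sqrt_pos.2 (by linarith)
  have hsap : 0 < sa := Real.sqrt_pos.2 ha
  have hsbp : 0 < sb := Real.sqrt_pos.2 hb
  have he1 : εbar1 = s1^2 := (Real.sq_sqrt hpos1.le).symm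
  have he1' : 1 - εbar1 = t1^2 := (Real.sq_sqrt (by linarith)).symm
  have he2 : εbar2 = s2^2 := (Real.sq_sqrt hpos2.le).symm
  have he2' : 1 - εbar2 = t2^2 := (Real.sq_sqrt (by linarith)).symm
  have hea : a = sa^2 := (Real.sq_sqrt ha.le).symm
  have heb : b = sb^2 := (Real.sq_sqrt hb.le).symm
  -- c in terms of the square roots
  have hcval : c = t2 * s1 / (s2 * t1) := by
    rw [hc]
    have h1 : (εbar2⁻¹ - 1) / (εbar1⁻¹ - 1) = (t2 * s1 / (s2 * t1))^2 := by
      have : εbar2⁻¹ - 1 = (1 - εbar2) / εbar2 := by field_simp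
      rw [this]
      have : εbar1⁻¹ - 1 = (1 - εbar1) / εbar1 := by field_simp
      rw [this, he2', he2, he1', he1]
      field_simp
    rw [h1, Real.sqrt_sq (by positivity)]
  -- sums split over S0 and its complement
  have key : ∀ (π : S → ℝ) (x y : ℝ), (∀ g ∈ S0, qε1 g / π g = x) →
      (∀ g ∈ S0ᶜ, qε1 g / π g = y) →
      ∑ g, qε1 g / π g = a * x + b * y := by
    intro π x y hx hy
    rw [← Finset.sum_add_sum_compl S0, Finset.sum_congr rfl hx, Finset.sum_congr rfl hy]
    simp [mul_comm]
    rfl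
  have hZ1' : Z1 = t1 * sa + s1 * sb := by
    rw [hZ1, Real.sqrt_mul (by linarith), Real.sqrt_mul hpos1.le]
  have hZ2' : Z2 = t2 * sa + s2 * sb := by
    rw [hZ2, Real.sqrt_mul (by linarith), Real.sqrt_mul hpos2.le]
  have hZ1p : Z1 ≠ 0 := by rw [hZ1']; exact (add_pos (mul_pos ht1p hsap) (mul_pos hs1p hsbp)).ne'
  have hZ2p : Z2 ≠ 0 := by rw [hZ2']; exact (add_pos (mul_pos ht2p hsap) (mul_pos hs2p hsbp)).ne'
  have sum2 : ∑ g, qε1 g / πε2 g =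
      a * (((1 - εbar1) / a) / (t2 / sa / Z2)) + b * ((εbar1 / b) / (s2 / sb / Z2)) := by
    refine key _ _ _ (fun g hg => ?_) (fun g hg => ?_)
    · rw [hqε1, hπε2, if_pos hg, if_pos hg, Real.sqrt_div (by linarith)]
    · rw [Finset.mem_compl] at hg
      rw [hqε1, hπε2, if_neg hg, if_neg hg, Real.sqrt_div hpos2.le]
  have sum1 : ∑ g, qε1 g / πε1 g =
      a * (((1 - εbar1) / a) / (t1 / sa / Z1)) + b * ((εbar1 / b) / (s1 / sb / Z1)) := by
    refine key _ _ _ (fun g hg => ?_) (fun g hg => ?_)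
    · rw [hqε1, hπε1, if_pos hg, if_pos hg, Real.sqrt_div (by linarith)]
    · rw [Finset.mem_compl] at hg
      rw [hqε1, hπε1, if_neg hg, if_neg hg, Real.sqrt_div hpos1.le]
  have hsqrt : Real.sqrt (εbar1 * (1 - εbar1) * a * b) = s1 * t1 * sa * sb := by
    rw [show εbar1 * (1 - εbar1) * a * b = (s1 * t1 * sa * sb)^2 by
      rw [he1', he1, hea, heb]; ring, Real.sqrt_sq (mul_pos (mul_pos (mul_pos hs1p ht1p) hsap) hsbp).le]
  rw [sum1, sum2, hsqrt, hcval, hZ1', hZ2', he1', he1]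
  field_simp
  ring
end

section
/- (Proposition 4.1) Let ε₁, ε₂ ≥ 0, set ε̄ᵢ = min{εᵢ + β, |𝒮₁|/|𝒮|}, and assume 0 < ε̄₁ < 1 and 0 < ε̄₂ < 1; let c(ε₁, ε₂) = √( (ε̄₂⁻¹ − 1)/(ε̄₁⁻¹ − 1) ). Then there exists a task distribution q on 𝒮 with D_TV(p_D, q) ≤ ε₁ such that the ε₂-robust meta-policy incurs excess regret over the ε₁-robust meta-policy: Regret(π^{ε₂}, q) − Regret(π^{ε₁}, q) ≥ ( c(ε₁,ε₂) + 1/c(ε₁,ε₂) − 2 ) · √( ε̄₁(1−ε̄₁)|𝒮₀||𝒮₁| ). -/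
lemma key_algebra (a b a2 b2 s t : ℝ) (hap : 0 < a) (hbp : 0 < b) (ha2p : 0 < a2)
    (hb2p : 0 < b2) (hsp : 0 < s) (htp : 0 < t) :
    (a2 * b / (a * b2) + 1 / (a2 * b / (a * b2)) - 2) * (b * a * s * t) =
          (s^2 * (a^2 / s^2 / (a2 / s / (a2 * s + b2 * t))) +
            t^2 * (b^2 / t^2 / (b2 / t / (a2 * s + b2 * t)))) -
          (s^2 * (a^2 / s^2 / (a / s / (a * s + b * t))) +
            t^2 * (b^2 / t^2 / (b / t / (a * s + b * t)))) := by
  field_simp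
  ring

lemma sum_if_const' {S : Type*} [Fintype S] [DecidableEq S] (S0 : Finset S) (x y : ℝ) :
    ∑ g, (if g ∈ S0 then x else y) = S0.card * x + S0ᶜ.card * y := by
  rw [← Finset.sum_add_sum_compl S0]
  congr 1
  · rw [Finset.sum_congr rfl (fun g hg => if_pos hg), Finset.sum_const, nsmul_eq_mul]
  · rw [Finset.sum_congr rfl (fun g hg => if_neg (Finset.mem_compl.mp hg)),
      Finset.sum_const, nsmul_eq_mul]

/-- (Proposition 4.1) With `ε̄ᵢ = min (εᵢ + β) (|S1|/|S|)` satisfying `0 < ε̄ᵢ < 1` and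
`c = √((ε̄₂⁻¹ - 1)/(ε̄₁⁻¹ - 1))`, there exists a task distribution `q` within total-variation
distance `ε₁` of the training distribution `p_D` on which the ε₂-robust meta-policy incurs
excess regret at least `(c + 1/c - 2)·√(ε̄₁(1-ε̄₁)|S0||S1|)` over the ε₁-robust meta-policy. -/
theorem stmt_14 {S : Type*} [Fintype S] [DecidableEq S] [Nonempty S]
    (S0 : Finset S) (hS0 : S0.Nonempty) (hS1 : S0ᶜ.Nonempty)
    (β ε1 ε2 : ℝ) (hβ0 : 0 ≤ β) (hβ1 : β ≤ 1) (hε1 : 0 ≤ ε1) (hε2 : 0 ≤ ε2)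
    (pD : S → ℝ)
    (hpD : ∀ g, pD g = if g ∈ S0 then (1 - β) / S0.card else β / S0ᶜ.card)
    (εbar1 εbar2 : ℝ)
    (hεbar1 : εbar1 = min (ε1 + β) ((S0ᶜ.card : ℝ) / Fintype.card S))
    (hεbar2 : εbar2 = min (ε2 + β) ((S0ᶜ.card : ℝ) / Fintype.card S))
    (hpos1 : 0 < εbar1) (hlt1 : εbar1 < 1)
    (hpos2 : 0 < εbar2) (hlt2 : εbar2 < 1)
    (c : ℝ) (hc : c = Real.sqrt ((εbar2⁻¹ - 1) / (εbar1⁻¹ - 1)))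
    (Z1 : ℝ) (hZ1 : Z1 = Real.sqrt ((1 - εbar1) * S0.card) + Real.sqrt (εbar1 * S0ᶜ.card))
    (Z2 : ℝ) (hZ2 : Z2 = Real.sqrt ((1 - εbar2) * S0.card) + Real.sqrt (εbar2 * S0ᶜ.card))
    (πε1 : S → ℝ)
    (hπε1 : ∀ g, πε1 g = if g ∈ S0 then Real.sqrt ((1 - εbar1) / S0.card) / Z1
        else Real.sqrt (εbar1 / S0ᶜ.card) / Z1)
    (πε2 : S → ℝ)
    (hπε2 : ∀ g, πε2 g = if g ∈ S0 then Real.sqrt ((1 - εbar2) / S0.card) / Z2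
        else Real.sqrt (εbar2 / S0ᶜ.card) / Z2) :
    ∃ q : S → ℝ, (∀ g, 0 ≤ q g) ∧ (∑ g, q g = 1) ∧
      (1 / 2) * (∑ g, |pD g - q g|) ≤ ε1 ∧
      (c + 1 / c - 2) * Real.sqrt (εbar1 * (1 - εbar1) * S0.card * S0ᶜ.card) ≤
        (∑ g, q g / πε2 g) - (∑ g, q g / πε1 g) := by
  have hn0 : (0:ℝ) < S0.card := by exact_mod_cast Finset.card_pos.mpr hS0
  have hn1 : (0:ℝ) < S0ᶜ.card := by exact_mod_cast Finset.card_pos.mpr hS1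
  by_cases hcase : β ≤ εbar1
  · -- main case: q has masses (1-εbar1, εbar1)
    set a := Real.sqrt (1 - εbar1) with ha
    set b := Real.sqrt εbar1 with hb
    set a2 := Real.sqrt (1 - εbar2) with ha2
    set b2 := Real.sqrt εbar2 with hb2
    set s := Real.sqrt (S0.card : ℝ) with hs
    set t := Real.sqrt (S0ᶜ.card : ℝ) with ht
    have hasq : a ^ 2 = 1 - εbar1 := Real.sq_sqrt (by linarith)
    have hbsq : b ^ 2 = εbar1 := Real.sq_sqrt hpos1.le
    have ha2sq : a2 ^ 2 = 1 - εbar2 := Real.sq_sqrt (by linarith)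
    have hb2sq : b2 ^ 2 = εbar2 := Real.sq_sqrt hpos2.le
    have hssq : s ^ 2 = (S0.card : ℝ) := Real.sq_sqrt hn0.le
    have htsq : t ^ 2 = (S0ᶜ.card : ℝ) := Real.sq_sqrt hn1.le
    have hap : 0 < a := Real.sqrt_pos.mpr (by linarith)
    have hbp : 0 < b := Real.sqrt_pos.mpr hpos1
    have ha2p : 0 < a2 := Real.sqrt_pos.mpr (by linarith)
    have hb2p : 0 < b2 := Real.sqrt_pos.mpr hpos2
    have hsp : 0 < s := Real.sqrt_pos.mpr hn0
    have htp : 0 < t := Real.sqrt_pos.mpr hn1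
    have hZ1' : Z1 = a * s + b * t := by
      rw [hZ1, Real.sqrt_mul (by linarith), Real.sqrt_mul hpos1.le]
    have hZ2' : Z2 = a2 * s + b2 * t := by
      rw [hZ2, Real.sqrt_mul (by linarith), Real.sqrt_mul hpos2.le]
    have hZ1p : 0 < Z1 := by rw [hZ1']; positivity
    have hZ2p : 0 < Z2 := by rw [hZ2']; positivity
    have hc' : c = a2 * b / (a * b2) := by
      rw [hc]
      have harg : (εbar2⁻¹ - 1) / (εbar1⁻¹ - 1) = (a2 * b / (a * b2)) ^ 2 := by
        have h1 : εbar2⁻¹ - 1 = (1 - εbar2) / εbar2 := by field_simp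
        have h2 : εbar1⁻¹ - 1 = (1 - εbar1) / εbar1 := by field_simp
        rw [h1, h2, ← hasq, ← hbsq, ← ha2sq, ← hb2sq]
        field_simp
      rw [harg, Real.sqrt_sq (by positivity)]
    have hcp : 0 < c := by rw [hc']; positivity
    refine ⟨fun g => if g ∈ S0 then (1 - εbar1) / S0.card else εbar1 / S0ᶜ.card,
      ?_, ?_, ?_, ?_⟩
    · intro g
      dsimp only
      by_cases h : g ∈ S0
      · rw [if_pos h]; exact div_nonneg (by linarith) hn0.le
      · rw [if_neg h]; exact div_nonneg hpos1.le hn1.le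
    · dsimp only
      rw [sum_if_const']
      field_simp
      ring
    · dsimp only
      have hterm : ∀ g : S, |pD g - (if g ∈ S0 then (1 - εbar1) / (S0.card:ℝ)
          else εbar1 / S0ᶜ.card)| =
          if g ∈ S0 then (εbar1 - β) / S0.card else (εbar1 - β) / S0ᶜ.card := by
        intro g
        rw [hpD g]
        by_cases h : g ∈ S0
        · simp only [if_pos h]
          rw [div_sub_div_same, abs_of_nonneg (div_nonneg (by linarith) hn0.le)]
          ring_nf
        · simp only [if_neg h]
          rw [div_sub_div_same,
            abs_of_nonpos (div_nonpos_of_nonpos_of_nonneg (by linarith) hn1.le), ← neg_div]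
          ring_nf
      rw [Finset.sum_congr rfl (fun g _ => hterm g), sum_if_const']
      have he : εbar1 ≤ ε1 + β := hεbar1 ▸ min_le_left _ _
      have h0 : (S0.card:ℝ) * ((εbar1 - β) / S0.card) = εbar1 - β := by field_simp
      have h1 : (S0ᶜ.card:ℝ) * ((εbar1 - β) / S0ᶜ.card) = εbar1 - β := by field_simp
      rw [h0, h1]
      linarith
    · dsimp only
      have hsd1 : Real.sqrt ((1 - εbar1) / (S0.card:ℝ)) = a / s :=
        Real.sqrt_div (by linarith) _
      have hsd2 : Real.sqrt (εbar1 / (S0ᶜ.card:ℝ)) = b / t :=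
        Real.sqrt_div hpos1.le _
      have hsd3 : Real.sqrt ((1 - εbar2) / (S0.card:ℝ)) = a2 / s :=
        Real.sqrt_div (by linarith) _
      have hsd4 : Real.sqrt (εbar2 / (S0ᶜ.card:ℝ)) = b2 / t :=
        Real.sqrt_div hpos2.le _
      have hq1 : ∀ g : S, (if g ∈ S0 then (1 - εbar1) / (S0.card:ℝ)
          else εbar1 / S0ᶜ.card) / πε1 g =
          if g ∈ S0 then (a^2 / s^2) / ((a / s) / Z1) else (b^2 / t^2) / ((b / t) / Z1) := by
        intro g
        rw [hπε1 g]
        by_cases h : g ∈ S0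
        · simp only [if_pos h]
          rw [hsd1, hasq, hssq]
        · simp only [if_neg h]
          rw [hsd2, hbsq, htsq]
      have hq2 : ∀ g : S, (if g ∈ S0 then (1 - εbar1) / (S0.card:ℝ)
          else εbar1 / S0ᶜ.card) / πε2 g =
          if g ∈ S0 then (a^2 / s^2) / ((a2 / s) / Z2) else (b^2 / t^2) / ((b2 / t) / Z2) := by
        intro g
        rw [hπε2 g]
        by_cases h : g ∈ S0
        · simp only [if_pos h]
          rw [hsd3, hasq, hssq]
        · simp only [if_neg h]
          rw [hsd4, hbsq, htsq]
      rw [Finset.sum_congr rfl (fun g _ => hq1 g), Finset.sum_congr rfl (fun g _ => hq2 g),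
        sum_if_const', sum_if_const']
      have hM : Real.sqrt (εbar1 * (1 - εbar1) * S0.card * S0ᶜ.card) = b * a * s * t := by
        have h1 : (0:ℝ) ≤ 1 - εbar1 := by linarith
        rw [Real.sqrt_mul (mul_nonneg (mul_nonneg hpos1.le h1) hn0.le),
          Real.sqrt_mul (mul_nonneg hpos1.le h1), Real.sqrt_mul hpos1.le]
      rw [hM, hc', ← hssq, ← htsq, hZ1', hZ2']
      rw [key_algebra a b a2 b2 s t hap hbp ha2p hb2p hsp htp]
  · -- degenerate case: εbar1 = εbar2 = |S1|/|S|, take q = pD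
    push_neg at hcase
    have hεr : εbar1 = (S0ᶜ.card : ℝ) / Fintype.card S := by
      rcases min_cases (ε1 + β) ((S0ᶜ.card : ℝ) / Fintype.card S) with ⟨h, _⟩ | ⟨h, _⟩
      · exfalso
        rw [hεbar1, h] at hcase
        linarith
      · rw [hεbar1, h]
    have hε2r : εbar2 = εbar1 := by
      rw [hεbar2, hεr, min_eq_right]
      rw [← hεr]
      linarith
    have hππ : ∀ g, πε2 g = πε1 g := by
      intro g
      rw [hπε1 g, hπε2 g, hε2r, hZ2, hε2r, ← hZ1]
    have hc1 : c = 1 := by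
      have hx : 0 < εbar1⁻¹ - 1 := by
        have := one_lt_inv₀ hpos1 |>.mpr hlt1
        linarith
      rw [hc, hε2r, div_self (ne_of_gt hx), Real.sqrt_one]
    refine ⟨pD, ?_, ?_, ?_, ?_⟩
    · intro g
      rw [hpD g]
      by_cases h : g ∈ S0
      · rw [if_pos h]; exact div_nonneg (by linarith) hn0.le
      · rw [if_neg h]; exact div_nonneg hβ0 hn1.le
    · rw [Finset.sum_congr rfl (fun g _ => hpD g), sum_if_const']
      field_simp
      ring
    · simp only [sub_self, abs_zero, Finset.sum_const_zero, mul_zero]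
      exact hε1
    · rw [Finset.sum_congr rfl (fun g _ => by rw [hππ g] : ∀ g ∈ Finset.univ,
        pD g / πε2 g = pD g / πε1 g)]
      rw [hc1]
      norm_num
end
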